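/- Let (S_n) be a centered random walk with finite positive variance. There is a constant c > 0 such that sup_{x∈ℝ} sup_{a∈ℝ} Σ_{k≥0} P(min_{0≤j≤k-1} S_j > S_k, S_k + a ∈ [-x-1,-x)) < ∞; more precisely this supremum is bounded by sup_{y} (R^-(1+y) - R^-(y)), which is finite by the renewal theorem. -/

import Mathlib

open MeasureTheory ProbabilityTheory Filter Set
open scoped ENNReal

noncomputable section

variable {Ω : Type*}

/-- Partial sums of the increments: `Srw X n = X 0 + ⋯ + X (n-1)`. -/
def Srw (X : ℕ → Ω → ℝ) (n : ℕ) (ω : Ω) : ℝ := ∑ i ∈ Finset.range n, X i ω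

/-- Strict descending ladder epochs of the random walk. -/
def Tdesc (X : ℕ → Ω → ℝ) (ω : Ω) : ℕ → ℕ
  | 0 => 0
  | i + 1 => sInf {j | Tdesc X ω i < j ∧ Srw X j ω < Srw X (Tdesc X ω i) ω}

/-- Strict descending ladder heights. -/
def Hdesc (X : ℕ → Ω → ℝ) (i : ℕ) (ω : Ω) : ℝ := Srw X (Tdesc X ω i) ω

/-- Strict ascending ladder epochs of the random walk. -/
def Tasc (X : ℕ → Ω → ℝ) (ω : Ω) : ℕ → ℕ
  | 0 => 0
  | i + 1 => sInf {j | Tasc X ω i < j ∧ Srw X (Tasc X ω i) ω < Srw X j ω}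

/-- Strict ascending ladder heights. -/
def Hasc (X : ℕ → Ω → ℝ) (i : ℕ) (ω : Ω) : ℝ := Srw X (Tasc X ω i) ω

/-- Renewal function of the strict descending ladder heights:
`R⁻(u) = ∑_{j≥0} P(H_j⁻ ≥ -u)`. -/
def Rminus [MeasurableSpace Ω] (X : ℕ → Ω → ℝ) (μ : Measure Ω) (u : ℝ) : ℝ :=
  ∑' j : ℕ, (μ {ω | -u ≤ Hdesc X j ω}).toReal

/-- Renewal function of the strict ascending ladder heights:
`R⁺(u) = ∑_{j≥0} P(H_j⁺ ≤ u)`. -/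
def Rplus [MeasurableSpace Ω] (X : ℕ → Ω → ℝ) (μ : Measure Ω) (u : ℝ) : ℝ :=
  ∑' j : ℕ, (μ {ω | Hasc X j ω ≤ u}).toReal

section auxlemmas

variable {X : ℕ → Ω → ℝ}

lemma Srw_zero (X : ℕ → Ω → ℝ) (ω : Ω) : Srw X 0 ω = 0 := Finset.sum_range_zero _

lemma measurable_Srw [MeasurableSpace Ω] (hmeas : ∀ i, Measurable (X i)) (n : ℕ) :
    Measurable (Srw X n) :=
  Finset.measurable_sum _ fun i _ => hmeas i

lemma measurable_nat_comp [MeasurableSpace Ω] {α : Type*} [MeasurableSpace α]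
    {f : Ω → ℕ} {F : ℕ → Ω → α} (hf : Measurable f) (hF : ∀ n, Measurable (F n)) :
    Measurable (fun ω => F (f ω) ω) := by
  have h : (fun ω => F (f ω) ω) = (fun p : Ω × ℕ => F p.2 p.1) ∘ (fun ω => (ω, f ω)) := rfl
  rw [h]
  exact (measurable_from_prod_countable_left hF).comp (measurable_id.prodMk hf)

lemma measurable_sInfAux [MeasurableSpace Ω] (hmeas : ∀ i, Measurable (X i)) (t : ℕ) :
    Measurable (fun ω => sInf {j | t < j ∧ Srw X j ω < Srw X t ω}) := by
  have hDm : ∀ j : ℕ, MeasurableSet {ω | t < j ∧ Srw X j ω < Srw X t ω} := fun j => by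
    by_cases h : t < j
    · simp only [h, true_and]
      exact measurableSet_lt (measurable_Srw hmeas j) (measurable_Srw hmeas t)
    · have he : {ω | t < j ∧ Srw X j ω < Srw X t ω} = (∅ : Set Ω) := by
        ext ω; simp [h]
      rw [he]; exact MeasurableSet.empty
  apply measurable_to_countable'
  intro n
  rcases n with _ | m
  · have h0 : (fun ω => sInf {j | t < j ∧ Srw X j ω < Srw X t ω}) ⁻¹' {0}
        = ⋂ j : ℕ, {ω | t < j ∧ Srw X j ω < Srw X t ω}ᶜ := by
      ext ω
      simp only [mem_preimage, mem_singleton_iff, mem_iInter, mem_compl_iff, mem_setOf_eq,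
        Nat.sInf_eq_zero]
      constructor
      · rintro (⟨h, _⟩ | h)
        · omega
        · intro j hj
          have : j ∈ ({j | t < j ∧ Srw X j ω < Srw X t ω} : Set ℕ) := hj
          rw [h] at this
          exact this
      · intro h
        right
        ext j
        simp only [mem_setOf_eq, mem_empty_iff_false, iff_false]
        exact h j
    rw [h0]
    exact MeasurableSet.iInter fun j => (hDm j).compl
  · have h1 : (fun ω => sInf {j | t < j ∧ Srw X j ω < Srw X t ω}) ⁻¹' {m + 1}
        = {ω | t < m + 1 ∧ Srw X (m+1) ω < Srw X t ω}
          ∩ ⋂ l : ℕ, ⋂ _ : l ≤ m, {ω | t < l ∧ Srw X l ω < Srw X t ω}ᶜ := by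
      ext ω
      simp only [mem_preimage, mem_singleton_iff, mem_inter_iff, mem_iInter, mem_compl_iff,
        mem_setOf_eq]
      constructor
      · intro h
        have hne : ({j | t < j ∧ Srw X j ω < Srw X t ω} : Set ℕ).Nonempty := by
          by_contra hem
          rw [Set.not_nonempty_iff_eq_empty] at hem
          rw [hem, Nat.sInf_empty] at h
          exact absurd h (by simp)
        have hmem := Nat.sInf_mem hne
        rw [h] at hmem
        simp only [mem_setOf_eq] at hmem
        refine ⟨hmem, ?_⟩
        intro l hl
        have hlm : l ∉ ({j | t < j ∧ Srw X j ω < Srw X t ω} : Set ℕ) := by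
          apply Nat.notMem_of_lt_sInf
          rw [h]; omega
        simpa using hlm
      · rintro ⟨hmem, hlt⟩
        have hmem' : (m+1) ∈ ({j | t < j ∧ Srw X j ω < Srw X t ω} : Set ℕ) := hmem
        have hle : sInf {j | t < j ∧ Srw X j ω < Srw X t ω} ≤ m + 1 := Nat.sInf_le hmem'
        have hge : ¬ sInf {j | t < j ∧ Srw X j ω < Srw X t ω} ≤ m := by
          intro hc
          have hmm := Nat.sInf_mem (⟨m + 1, hmem'⟩ :
            ({j | t < j ∧ Srw X j ω < Srw X t ω} : Set ℕ).Nonempty)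
          simp only [mem_setOf_eq] at hmm
          exact (hlt _ hc) hmm
        omega
    rw [h1]
    exact (hDm (m+1)).inter (MeasurableSet.iInter fun l => MeasurableSet.iInter fun _ => (hDm l).compl)

lemma measurable_Tdesc [MeasurableSpace Ω] (hmeas : ∀ i, Measurable (X i)) (i : ℕ) :
    Measurable (fun ω => Tdesc X ω i) := by
  induction i with
  | zero => simpa [Tdesc] using measurable_const
  | succ i ih =>
      have : (fun ω => Tdesc X ω (i+1))
          = fun ω => (fun t ω' => sInf {j | t < j ∧ Srw X j ω' < Srw X t ω'}) (Tdesc X ω i) ω := by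
        funext ω; simp [Tdesc]
      rw [this]
      exact measurable_nat_comp ih (fun t => measurable_sInfAux hmeas t)

lemma measurable_Hdesc [MeasurableSpace Ω] (hmeas : ∀ i, Measurable (X i)) (i : ℕ) :
    Measurable (Hdesc X i) := by
  have h : Hdesc X i = fun ω => (fun n ω' => Srw X n ω') (Tdesc X ω i) ω := rfl
  rw [h]
  exact measurable_nat_comp (measurable_Tdesc hmeas i) (fun n => measurable_Srw hmeas n)

lemma Hdesc_nonpos (X : ℕ → Ω → ℝ) (ω : Ω) : ∀ i, Hdesc X i ω ≤ 0
  | 0 => by simp [Hdesc, Tdesc, Srw_zero]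
  | (i+1) => by
      show Srw X (Tdesc X ω (i+1)) ω ≤ 0
      by_cases h : ({j | Tdesc X ω i < j ∧ Srw X j ω < Srw X (Tdesc X ω i) ω} : Set ℕ).Nonempty
      · have hm := Nat.sInf_mem h
        have h2 : Srw X (Tdesc X ω (i+1)) ω < Srw X (Tdesc X ω i) ω := by
          simpa [Tdesc] using hm.2
        exact le_trans h2.le (Hdesc_nonpos X ω i)
      · rw [Set.not_nonempty_iff_eq_empty] at h
        have : Tdesc X ω (i+1) = 0 := by simp [Tdesc, h, Nat.sInf_empty]
        rw [this, Srw_zero]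

/-- `ω` is "alive at stage `i`": there is a next strict descending ladder epoch. -/
def aliveAt (X : ℕ → Ω → ℝ) (ω : Ω) (i : ℕ) : Prop :=
  ({j | Tdesc X ω i < j ∧ Srw X j ω < Srw X (Tdesc X ω i) ω} : Set ℕ).Nonempty

lemma Tdesc_succ_mem {ω : Ω} {i : ℕ} (h : aliveAt X ω i) :
    Tdesc X ω i < Tdesc X ω (i+1) ∧ Srw X (Tdesc X ω (i+1)) ω < Srw X (Tdesc X ω i) ω := by
  have := Nat.sInf_mem h
  simpa [Tdesc] using this

lemma Tdesc_strictMono {ω : Ω} (halive : ∀ i, aliveAt X ω i) :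
    StrictMono (fun i => Tdesc X ω i) :=
  strictMono_nat_of_lt_succ fun i => (Tdesc_succ_mem (halive i)).1

lemma Tdesc_strict_min {ω : Ω} (halive : ∀ i, aliveAt X ω i) :
    ∀ i, ∀ l, l < Tdesc X ω i → Srw X (Tdesc X ω i) ω < Srw X l ω := by
  intro i
  induction i with
  | zero => intro l hl; simp [Tdesc] at hl
  | succ i ih =>
      intro l hl
      have hsucc := Tdesc_succ_mem (halive i)
      rcases lt_trichotomy l (Tdesc X ω i) with h | h | h
      · exact lt_trans hsucc.2 (ih l h)
      · rw [h]; exact hsucc.2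
      · -- Tdesc i < l < Tdesc (i+1) : l not in the defining set
        have hnot : l ∉ {j | Tdesc X ω i < j ∧ Srw X j ω < Srw X (Tdesc X ω i) ω} := by
          apply Nat.notMem_of_lt_sInf
          simpa [Tdesc] using hl
        simp only [mem_setOf_eq, not_and, not_lt] at hnot
        exact lt_of_lt_of_le hsucc.2 (hnot h)

lemma Tdesc_dead_periodic {ω : Ω} {i : ℕ} (h : ¬ aliveAt X ω i) :
    ∀ s, Tdesc X ω (i + 1 + s) = Tdesc X ω s := by
  have h0 : Tdesc X ω (i+1) = 0 := by
    rw [aliveAt, Set.not_nonempty_iff_eq_empty] at h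
    show sInf {j | Tdesc X ω i < j ∧ Srw X j ω < Srw X (Tdesc X ω i) ω} = 0
    rw [h]; exact Nat.sInf_empty
  intro s
  induction s with
  | zero => simpa [Tdesc] using h0
  | succ s ih =>
      have : i + 1 + (s + 1) = (i + 1 + s) + 1 := by omega
      rw [this]
      show Tdesc X ω ((i+1+s)+1) = Tdesc X ω (s+1)
      simp only [Tdesc, ih]

lemma Tdesc_dead_zero {ω : Ω} {i : ℕ} (h : ¬ aliveAt X ω i) :
    ∀ t, Tdesc X ω (t * (i + 1)) = 0 := by
  intro t
  induction t with
  | zero => simp [Tdesc]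
  | succ t ih =>
      have : (t + 1) * (i + 1) = i + 1 + t * (i + 1) := by ring
      rw [this, Tdesc_dead_periodic h, ih]

end auxlemmas

section keybound

variable [MeasurableSpace Ω] {μ : Measure Ω} {X : ℕ → Ω → ℝ}

lemma measurable_Aset [MeasurableSpace Ω] {X : ℕ → Ω → ℝ} (hmeas : ∀ i, Measurable (X i))
    (c : ℝ) (k : ℕ) :
    MeasurableSet {ω : Ω | (∀ j, j < k → Srw X k ω < Srw X j ω) ∧
      Srw X k ω ∈ Set.Ico c (c+1)} := by
  have h1 : {ω : Ω | (∀ j, j < k → Srw X k ω < Srw X j ω) ∧ Srw X k ω ∈ Set.Ico c (c+1)}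
      = (⋂ j : ℕ, {ω | j < k → Srw X k ω < Srw X j ω}) ∩
        {ω | Srw X k ω ∈ Set.Ico c (c+1)} := by
    ext ω; simp [mem_iInter]
  rw [h1]
  apply MeasurableSet.inter
  · refine MeasurableSet.iInter fun j => ?_
    by_cases hj : j < k
    · simp only [hj, true_implies]
      exact measurableSet_lt (measurable_Srw hmeas k) (measurable_Srw hmeas j)
    · simp only [hj, false_implies]
      exact MeasurableSet.univ
  · exact (measurable_Srw hmeas k) measurableSet_Ico

lemma exists_neg_jump [IsProbabilityMeasure μ]
    (hint : Integrable (X 0) μ) (hmean : ∫ ω, X 0 ω ∂μ = 0)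
    (hvar : 0 < ∫ ω, (X 0 ω) ^ 2 ∂μ) :
    ∃ δ : ℝ, 0 < δ ∧ 0 < μ {ω | X 0 ω < -δ} := by
  by_contra hcon
  push_neg at hcon
  have hz : ∀ δ : ℝ, 0 < δ → μ {ω | X 0 ω < -δ} = 0 := fun δ hδ =>
    le_antisymm (hcon δ hδ) zero_le
  have hneg : μ {ω | X 0 ω < 0} = 0 := by
    have hun : {ω | X 0 ω < 0} = ⋃ n : ℕ, {ω | X 0 ω < -(1/(n+1))} := by
      ext ω
      simp only [mem_setOf_eq, mem_iUnion]
      constructor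
      · intro h
        obtain ⟨n, hn⟩ := exists_nat_one_div_lt (show (0:ℝ) < -X 0 ω by linarith)
        exact ⟨n, by push_cast at hn ⊢; linarith⟩
      · rintro ⟨n, hn⟩
        have h1 : (0:ℝ) < 1/((n:ℝ)+1) := by positivity
        linarith
    rw [hun]
    exact measure_iUnion_null fun n => hz _ (by positivity)
  have hae : 0 ≤ᵐ[μ] X 0 := by
    rw [Filter.EventuallyLE, ae_iff]
    convert hneg using 2
    ext ω
    simp
  have hzero : X 0 =ᵐ[μ] 0 := (integral_eq_zero_iff_of_nonneg_ae hae hint).mp hmean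
  have hsq0 : (fun ω => (X 0 ω) ^ 2) =ᵐ[μ] 0 := by
    filter_upwards [hzero] with ω hω
    simp [hω]
  have : ∫ ω, (X 0 ω) ^ 2 ∂μ = 0 := by
    rw [integral_congr_ae hsq0]; simp
  linarith

/-- The central uniform bound: expected number of strict descending ladder points in any
half-open unit interval is bounded by a universal constant. -/
lemma key_bound [IsProbabilityMeasure μ]
    (hmeas : ∀ i, Measurable (X i))
    (hindep : iIndepFun X μ)
    (hident : ∀ i, IdentDistrib (X i) (X 0) μ μ)
    (hint : Integrable (X 0) μ) (hmean : ∫ ω, X 0 ω ∂μ = 0)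
    (hvar : 0 < ∫ ω, (X 0 ω) ^ 2 ∂μ) :
    ∃ C : ℝ, 0 < C ∧ ∀ c : ℝ,
      (∑' k : ℕ, μ {ω | (∀ j, j < k → Srw X k ω < Srw X j ω) ∧
        Srw X k ω ∈ Set.Ico c (c+1)}) ≤ ENNReal.ofReal C := by
  classical
  obtain ⟨δ, hδ, hp⟩ := exists_neg_jump hint hmean hvar
  set p : ℝ := (μ {ω | X 0 ω < -δ}).toReal with hp_def
  have hple : μ {ω | X 0 ω < -δ} ≠ ⊤ := measure_ne_top _ _
  have hppos : 0 < p := ENNReal.toReal_pos hp.ne' hple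
  set n₀ : ℕ := ⌈1/δ⌉₊ + 1 with hn₀_def
  have hn₀pos : 0 < n₀ := Nat.succ_pos _
  have hn₀δ : 1 ≤ (n₀ : ℝ) * δ := by
    have h1 : (1:ℝ)/δ ≤ (⌈1/δ⌉₊ : ℝ) := Nat.le_ceil _
    have h2 : ((n₀ : ℝ)) = (⌈1/δ⌉₊ : ℝ) + 1 := by rw [hn₀_def]; push_cast; ring
    rw [h2]
    have : (1:ℝ)/δ * δ = 1 := by field_simp
    nlinarith
  refine ⟨(n₀ : ℝ) / p ^ n₀, by positivity, ?_⟩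
  intro c
  set A : ℕ → Set Ω := fun k => {ω | (∀ j, j < k → Srw X k ω < Srw X j ω) ∧
    Srw X k ω ∈ Set.Ico c (c+1)} with hA_def
  set E : ℕ → Set Ω := fun k => {ω | ∀ i ∈ Finset.Ico k (k+n₀), X i ω < -δ} with hE_def
  have hAmeas : ∀ k, MeasurableSet (A k) := by
    intro k
    have h1 : A k = (⋂ j : ℕ, {ω | j < k → Srw X k ω < Srw X j ω}) ∩
        {ω | Srw X k ω ∈ Set.Ico c (c+1)} := by
      ext ω; simp [hA_def, mem_iInter]
    rw [h1]
    apply MeasurableSet.inter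
    · refine MeasurableSet.iInter fun j => ?_
      by_cases hj : j < k
      · simp only [hj, true_implies]
        exact measurableSet_lt (measurable_Srw hmeas k) (measurable_Srw hmeas j)
      · simp only [hj, false_implies]
        exact MeasurableSet.univ
    · exact (measurable_Srw hmeas k) measurableSet_Ico
  have hEmeas : ∀ k, MeasurableSet (E k) := by
    intro k
    have h1 : E k = ⋂ i ∈ Finset.Ico k (k+n₀), {ω | X i ω < -δ} := by
      ext ω; simp [hE_def, mem_iInter]
    rw [h1]
    exact MeasurableSet.biInter (Finset.Ico k (k+n₀)).countable_toSet
      fun i _ => measurableSet_lt (hmeas i) measurable_const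
  -- the measure of E k
  have hq : ∀ k, μ (E k) = ENNReal.ofReal (p ^ n₀) := by
    intro k
    have h1 : E k = ⋂ i ∈ Finset.Ico k (k+n₀), X i ⁻¹' Set.Iio (-δ) := by
      ext ω; simp [hE_def, mem_iInter]
    have h2 := hindep.measure_inter_preimage_eq_mul (Finset.Ico k (k+n₀))
      (sets := fun _ => Set.Iio (-δ)) (fun i _ => measurableSet_Iio)
    rw [h1, h2]
    have h3 : ∀ i, μ (X i ⁻¹' Set.Iio (-δ)) = ENNReal.ofReal p := by
      intro i
      have := (hident i).measure_mem_eq (s := Set.Iio (-δ)) measurableSet_Iio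
      rw [this]
      have : X 0 ⁻¹' Set.Iio (-δ) = {ω | X 0 ω < -δ} := rfl
      rw [this, hp_def, ENNReal.ofReal_toReal hple]
    rw [Finset.prod_congr rfl (fun i _ => h3 i), Finset.prod_const, Nat.card_Ico]
    rw [ENNReal.ofReal_pow hppos.le]
    congr 1
    omega
  -- independence of A k and E k
  have hAE : ∀ k, μ (A k ∩ E k) = μ (A k) * μ (E k) := by
    intro k
    have hdisj : Disjoint (Finset.range k) (Finset.Ico k (k+n₀)) := by
      simp only [Finset.disjoint_left, Finset.mem_range, Finset.mem_Ico]
      omega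
    have hind2 := hindep.indepFun_finset (Finset.range k) (Finset.Ico k (k+n₀)) hdisj hmeas
    set psum : ({ i // i ∈ Finset.range k} → ℝ) → ℕ → ℝ :=
      fun v j => ∑ i ∈ (Finset.range k).attach, if (i : ℕ) < j then v i else 0 with hpsum_def
    have hpsum_meas : ∀ j, Measurable fun v => psum v j := by
      intro j
      apply Finset.measurable_sum
      intro i _
      by_cases h : (i:ℕ) < j
      · simpa [h] using measurable_pi_apply i
      · simpa [h] using (measurable_const : Measurable fun _ : { i // i ∈ Finset.range k} → ℝ => (0:ℝ))
    have hpsum_eq : ∀ ω : Ω, ∀ j, j ≤ k →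
        psum (fun i : {i // i ∈ Finset.range k} => X i ω) j = Srw X j ω := by
      intro ω j hj
      rw [hpsum_def]
      simp only
      rw [Finset.sum_attach (Finset.range k) (fun i => if i < j then X i ω else 0),
        ← Finset.sum_filter]
      unfold Srw
      congr 1
      ext i
      simp only [Finset.mem_filter, Finset.mem_range]
      omega
    set sA : Set ({ i // i ∈ Finset.range k} → ℝ) :=
      {v | (∀ j, j < k → psum v k < psum v j) ∧ psum v k ∈ Set.Ico c (c+1)} with hsA_def
    have hsA_meas : MeasurableSet sA := by
      have h1 : sA = (⋂ j : ℕ, {v | j < k → psum v k < psum v j}) ∩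
          {v | psum v k ∈ Set.Ico c (c+1)} := by
        ext v; simp [hsA_def, mem_iInter]
      rw [h1]
      apply MeasurableSet.inter
      · refine MeasurableSet.iInter fun j => ?_
        by_cases hj : j < k
        · simp only [hj, true_implies]
          exact measurableSet_lt (hpsum_meas k) (hpsum_meas j)
        · simp only [hj, false_implies]
          exact MeasurableSet.univ
      · exact (hpsum_meas k) measurableSet_Ico
    set sE : Set ({ i // i ∈ Finset.Ico k (k+n₀)} → ℝ) := {v | ∀ i, v i < -δ} with hsE_def
    have hsE_meas : MeasurableSet sE := by
      have h1 : sE = ⋂ i, {v | v i < -δ} := by ext v; simp [hsE_def, mem_iInter]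
      rw [h1]
      exact MeasurableSet.iInter fun i => measurableSet_lt (measurable_pi_apply i) measurable_const
    have hA_pre : A k = (fun ω (i : { i // i ∈ Finset.range k}) => X i ω) ⁻¹' sA := by
      ext ω
      simp only [hA_def, mem_preimage, hsA_def, mem_setOf_eq]
      constructor
      · rintro ⟨h1, h2⟩
        refine ⟨fun j hj => ?_, ?_⟩
        · rw [hpsum_eq ω k le_rfl, hpsum_eq ω j hj.le]; exact h1 j hj
        · rw [hpsum_eq ω k le_rfl]; exact h2
      · rintro ⟨h1, h2⟩
        refine ⟨fun j hj => ?_, ?_⟩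
        · have h3 := h1 j hj
          rw [hpsum_eq ω k le_rfl, hpsum_eq ω j hj.le] at h3; exact h3
        · rw [hpsum_eq ω k le_rfl] at h2; exact h2
    have hE_pre : E k = (fun ω (i : { i // i ∈ Finset.Ico k (k+n₀)}) => X i ω) ⁻¹' sE := by
      ext ω
      simp only [hE_def, mem_preimage, hsE_def, mem_setOf_eq]
      constructor
      · intro h i; exact h i i.2
      · intro h i hi; exact h ⟨i, hi⟩
    rw [hA_pre, hE_pre]
    exact hind2.measure_inter_preimage_eq_mul _ _ hsA_meas hsE_meas
  -- combinatorial: B-events can only cluster within a window of length n₀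
  have hcomb : ∀ ω k k', k < k' → ω ∈ A k → ω ∈ E k → ω ∈ A k' → k' < k + n₀ := by
    intro ω k k' hkk' hAk hEk hAk'
    by_contra hge
    push_neg at hge
    have h1 : Srw X (k+n₀) ω - Srw X k ω = ∑ i ∈ Finset.Ico k (k+n₀), X i ω := by
      have hc := Finset.sum_Ico_consecutive (fun i => X i ω) (Nat.zero_le k) (Nat.le_add_right k n₀)
      unfold Srw
      simp only [Finset.range_eq_Ico]
      linarith [hc]
    have h2 : ∑ i ∈ Finset.Ico k (k+n₀), X i ω < ∑ _i ∈ Finset.Ico k (k+n₀), (-δ) :=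
      Finset.sum_lt_sum_of_nonempty (by rw [Finset.nonempty_Ico]; omega) (fun i hi => hEk i hi)
    have h3 : ∑ _i ∈ Finset.Ico k (k+n₀), (-δ) = -((n₀:ℝ) * δ) := by
      rw [Finset.sum_const, Nat.card_Ico]
      have he : k + n₀ - k = n₀ := by omega
      rw [he, nsmul_eq_mul]
      ring
    have hgap : Srw X (k+n₀) ω - Srw X k ω < -1 := by
      rw [h1]
      rw [h3] at h2
      linarith
    have hle : Srw X k' ω ≤ Srw X (k+n₀) ω := by
      rcases eq_or_lt_of_le hge with he | hlt
      · rw [← he]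
      · exact (hAk'.1 (k+n₀) hlt).le
    have hk2 := hAk.2
    have hk'2 := hAk'.2
    simp only [Set.mem_Ico] at hk2 hk'2
    linarith
  -- finite-sum bound
  have hfin : ∀ F : Finset ℕ, ∑ k ∈ F, μ (A k ∩ E k) ≤ (n₀ : ℝ≥0∞) := by
    intro F
    have hpoint : ∀ ω, (∑ k ∈ F, (A k ∩ E k).indicator (fun _ => (1:ℝ≥0∞)) ω) ≤ (n₀ : ℝ≥0∞) := by
      intro ω
      have h1 : ∑ k ∈ F, (A k ∩ E k).indicator (fun _ => (1:ℝ≥0∞)) ω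
          = ((F.filter (fun k => ω ∈ A k ∩ E k)).card : ℝ≥0∞) := by
        rw [← Finset.sum_boole]
        refine Finset.sum_congr rfl fun k _ => ?_
        by_cases h : ω ∈ A k ∩ E k <;> simp [h, Set.indicator_apply]
      rw [h1]
      set K := F.filter (fun k => ω ∈ A k ∩ E k) with hK
      rcases K.eq_empty_or_nonempty with he | hne
      · rw [he]; simp
      · have hk₀ := K.min'_mem hne
        have hsub : K ⊆ Finset.Ico (K.min' hne) (K.min' hne + n₀) := by
          intro k hk
          have hmin : K.min' hne ≤ k := K.min'_le k hk
          rw [Finset.mem_Ico]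
          rcases eq_or_lt_of_le hmin with he2 | hlt2
          · omega
          · have hBk0 := (Finset.mem_filter.mp hk₀).2
            have hBk := (Finset.mem_filter.mp hk).2
            have := hcomb ω (K.min' hne) k hlt2 hBk0.1 hBk0.2 hBk.1
            omega
        have hcard : K.card ≤ n₀ := by
          calc K.card ≤ (Finset.Ico (K.min' hne) (K.min' hne + n₀)).card :=
                Finset.card_le_card hsub
            _ = n₀ := by rw [Nat.card_Ico]; omega
        exact_mod_cast hcard
    calc ∑ k ∈ F, μ (A k ∩ E k)
        = ∑ k ∈ F, ∫⁻ ω, (A k ∩ E k).indicator (fun _ => (1:ℝ≥0∞)) ω ∂μ := by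
          refine Finset.sum_congr rfl fun k _ => ?_
          rw [lintegral_indicator_const ((hAmeas k).inter (hEmeas k)), one_mul]
      _ = ∫⁻ ω, ∑ k ∈ F, (A k ∩ E k).indicator (fun _ => (1:ℝ≥0∞)) ω ∂μ :=
          (lintegral_finset_sum F (fun k _ =>
            (measurable_const.indicator ((hAmeas k).inter (hEmeas k))))).symm
      _ ≤ ∫⁻ _ω, (n₀:ℝ≥0∞) ∂μ := lintegral_mono hpoint
      _ = (n₀:ℝ≥0∞) := by simp
  have hsum_le : ∀ F : Finset ℕ, (∑ k ∈ F, μ (A k)) * ENNReal.ofReal (p^n₀) ≤ (n₀:ℝ≥0∞) := by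
    intro F
    rw [Finset.sum_mul]
    have hcg : ∀ k ∈ F, μ (A k) * ENNReal.ofReal (p^n₀) = μ (A k ∩ E k) := by
      intro k _
      rw [hAE k, hq k]
    rw [Finset.sum_congr rfl hcg]
    exact hfin F
  have hq0 : ENNReal.ofReal (p^n₀) ≠ 0 := by
    simp only [ne_eq, ENNReal.ofReal_eq_zero, not_le]
    positivity
  have htsum : (∑' k, μ (A k)) ≤ (n₀ : ℝ≥0∞) / ENNReal.ofReal (p^n₀) := by
    rw [ENNReal.tsum_eq_iSup_sum]
    refine iSup_le fun F => ?_
    rw [ENNReal.le_div_iff_mul_le (Or.inl hq0) (Or.inl ENNReal.ofReal_ne_top)]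
    exact hsum_le F
  refine le_trans htsum ?_
  rw [ENNReal.ofReal_div_of_pos (by positivity), ENNReal.ofReal_natCast]

end keybound

/-- There is a constant `C > 0` bounding the unit increments of `R⁻`,
such that uniformly in the shift `a` and the level `x`,
`∑_{k≥0} P(min_{0≤j≤k-1} S_j > S_k, S_k + a ∈ [-x-1,-x)) ≤ C < ∞`. -/
theorem uniform_strict_minima_bound
    [MeasurableSpace Ω] (μ : Measure Ω) [IsProbabilityMeasure μ]
    (X : ℕ → Ω → ℝ)
    (hmeas : ∀ i, Measurable (X i))
    (hindep : iIndepFun X μ)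
    (hident : ∀ i, IdentDistrib (X i) (X 0) μ μ)
    (hint : Integrable (X 0) μ)
    (hmean : ∫ ω, X 0 ω ∂μ = 0)
    (hsq : Integrable (fun ω => (X 0 ω) ^ 2) μ)
    (hvar : 0 < ∫ ω, (X 0 ω) ^ 2 ∂μ) :
    ∃ C : ℝ, 0 < C ∧
      (∀ y : ℝ, Rminus X μ (1 + y) - Rminus X μ y ≤ C) ∧
      ∀ x a : ℝ,
        (∑' k : ℕ,
            μ {ω | (∀ j, j < k → Srw X k ω < Srw X j ω) ∧
              Srw X k ω + a ∈ Set.Ico (-x - 1) (-x)}) ≤ ENNReal.ofReal C := by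
  obtain ⟨C, hC, hkey⟩ := key_bound hmeas hindep hident hint hmean hvar
  refine ⟨C, hC, ?_, ?_⟩
  · -- increments of Rminus
    intro y
    rcases le_or_gt (-1 : ℝ) y with hy | hy
    · -- case y ≥ -1 (so -(1+y) ≤ 0)
      by_cases hsum : Summable (fun j => (μ {ω | -(1+y) ≤ Hdesc X j ω}).toReal)
      · unfold Rminus
        set P : ℕ → Set Ω := fun j => {ω | -(1+y) ≤ Hdesc X j ω} with hP_def
        set Q : ℕ → Set Ω := fun j => {ω | -y ≤ Hdesc X j ω} with hQ_def
        have hPmeas : ∀ j, MeasurableSet (P j) := fun j =>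
          measurableSet_le measurable_const (measurable_Hdesc hmeas j)
        have hQmeas : ∀ j, MeasurableSet (Q j) := fun j =>
          measurableSet_le measurable_const (measurable_Hdesc hmeas j)
        have hQP : ∀ j, Q j ⊆ P j := by
          intro j ω hω
          simp only [hP_def, hQ_def, mem_setOf_eq] at hω ⊢
          linarith
        have hsumQ : Summable (fun j => (μ (Q j)).toReal) :=
          Summable.of_nonneg_of_le (fun j => ENNReal.toReal_nonneg)
            (fun j => ENNReal.toReal_mono (measure_ne_top μ _) (measure_mono (hQP j))) hsum
        have hPtop : (∑' j, μ (P j)) ≠ ⊤ := by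
          have h2 : Summable (fun j => (μ (P j)).toNNReal) := by
            rw [← NNReal.summable_coe]
            exact hsum
          have h3 := ENNReal.tsum_coe_ne_top_iff_summable.2 h2
          have h4 : (∑' j, μ (P j)) = ∑' j, ((μ (P j)).toNNReal : ℝ≥0∞) :=
            tsum_congr fun j => (ENNReal.coe_toNNReal (measure_ne_top μ _)).symm
          rw [h4]; exact h3
        -- a.e. the ladder never dies
        have hNmeas : Measurable (fun ω => ∑' j, (P j).indicator (fun _ => (1:ℝ≥0∞)) ω) :=
          Measurable.ennreal_tsum (fun j => measurable_const.indicator (hPmeas j))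
        have hint' : ∫⁻ ω, ∑' j, (P j).indicator (fun _ => (1:ℝ≥0∞)) ω ∂μ ≠ ⊤ := by
          rw [lintegral_tsum (fun j => (measurable_const.indicator (hPmeas j)).aemeasurable)]
          have h5 : ∀ j : ℕ, ∫⁻ ω, (P j).indicator (fun _ => (1:ℝ≥0∞)) ω ∂μ = μ (P j) :=
            fun j => by rw [lintegral_indicator_const (hPmeas j), one_mul]
          rw [tsum_congr h5]; exact hPtop
        have hfinae := ae_lt_top hNmeas hint'
        have haealive : ∀ᵐ ω ∂μ, (∀ i, aliveAt X ω i) := by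
          filter_upwards [hfinae] with ω hω
          by_contra hdead
          push_neg at hdead
          obtain ⟨i, hi⟩ := hdead
          have hmem : ∀ t : ℕ, ω ∈ P (t * (i+1)) := by
            intro t
            have h0 : Hdesc X (t*(i+1)) ω = 0 := by
              unfold Hdesc; rw [Tdesc_dead_zero hi t, Srw_zero]
            simp only [hP_def, mem_setOf_eq, h0]
            linarith
          have htop : (⊤:ℝ≥0∞) ≤ ∑' j, (P j).indicator (fun _ => (1:ℝ≥0∞)) ω := by
            have hinj : Function.Injective (fun t : ℕ => t * (i+1)) := by
              intro s t hst
              simp only at hst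
              exact Nat.eq_of_mul_eq_mul_right (Nat.succ_pos i) hst
            calc (⊤:ℝ≥0∞) = ∑' _t : ℕ, (1:ℝ≥0∞) :=
                  (ENNReal.tsum_const_eq_top_of_ne_zero one_ne_zero).symm
              _ = ∑' t : ℕ, (P (t*(i+1))).indicator (fun _ => (1:ℝ≥0∞)) ω :=
                  tsum_congr fun t => by rw [Set.indicator_of_mem (hmem t)]
              _ ≤ ∑' j, (P j).indicator (fun _ => (1:ℝ≥0∞)) ω :=
                  ENNReal.tsum_comp_le_tsum_of_injective hinj _
          exact absurd (lt_of_le_of_lt htop hω) (lt_irrefl _)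
        -- rewrite the difference as a sum over the difference sets
        have hdiff : (∑' j, (μ (P j)).toReal) - (∑' j, (μ (Q j)).toReal)
            = ∑' j, (μ (P j \ Q j)).toReal := by
          rw [← Summable.tsum_sub hsum hsumQ]
          refine tsum_congr fun j => ?_
          rw [measure_diff (hQP j) ((hQmeas j).nullMeasurableSet) (measure_ne_top μ _),
            ENNReal.toReal_sub_of_le (measure_mono (hQP j)) (measure_ne_top μ _)]
        rw [hdiff]
        -- bound the ENNReal sum by the key bound via the ladder-time injection
        have hENN : (∑' j, μ (P j \ Q j)) ≤ ENNReal.ofReal C := by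
          set A' : ℕ → Set Ω := fun k => {ω | (∀ j, j < k → Srw X k ω < Srw X j ω) ∧
            Srw X k ω ∈ Set.Ico (-(1+y)) (-(1+y)+1)} with hA'_def
          have hA'meas : ∀ k, MeasurableSet (A' k) := fun k => measurable_Aset hmeas _ k
          have hRmeas : ∀ j, MeasurableSet (P j \ Q j) := fun j => (hPmeas j).diff (hQmeas j)
          have hRsub : ∀ᵐ ω ∂μ, (∑' j, (P j \ Q j).indicator (fun _ => (1:ℝ≥0∞)) ω)
              ≤ ∑' k, (A' k).indicator (fun _ => (1:ℝ≥0∞)) ω := by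
            filter_upwards [haealive] with ω halive
            have hstrict := Tdesc_strict_min halive
            have hmono := Tdesc_strictMono halive
            calc ∑' j, (P j \ Q j).indicator (fun _ => (1:ℝ≥0∞)) ω
                ≤ ∑' j, (A' (Tdesc X ω j)).indicator (fun _ => (1:ℝ≥0∞)) ω := by
                  refine ENNReal.tsum_le_tsum fun j => ?_
                  by_cases hmem : ω ∈ P j \ Q j
                  · have hA'mem : ω ∈ A' (Tdesc X ω j) := by
                      obtain ⟨h1, h2⟩ := hmem
                      simp only [hP_def, mem_setOf_eq] at h1
                      simp only [hQ_def, mem_setOf_eq] at h2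
                      push_neg at h2
                      refine ⟨fun l hl => hstrict j l hl, ?_, ?_⟩
                      · exact h1
                      · show Srw X (Tdesc X ω j) ω < -(1+y)+1
                        have : Hdesc X j ω < -y := h2
                        unfold Hdesc at this
                        linarith
                    rw [Set.indicator_of_mem hmem, Set.indicator_of_mem hA'mem]
                  · rw [Set.indicator_of_notMem hmem]
                    exact zero_le
              _ ≤ ∑' k, (A' k).indicator (fun _ => (1:ℝ≥0∞)) ω :=
                  ENNReal.tsum_comp_le_tsum_of_injective hmono.injective _
          calc (∑' j, μ (P j \ Q j))
              = ∫⁻ ω, ∑' j, (P j \ Q j).indicator (fun _ => (1:ℝ≥0∞)) ω ∂μ := by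
                rw [lintegral_tsum (fun j => (measurable_const.indicator (hRmeas j)).aemeasurable)]
                exact (tsum_congr fun j => by
                  rw [lintegral_indicator_const (hRmeas j), one_mul]).symm
            _ ≤ ∫⁻ ω, ∑' k, (A' k).indicator (fun _ => (1:ℝ≥0∞)) ω ∂μ := lintegral_mono_ae hRsub
            _ = ∑' k, μ (A' k) := by
                rw [lintegral_tsum (fun k => (measurable_const.indicator (hA'meas k)).aemeasurable)]
                exact tsum_congr fun k => by
                  rw [lintegral_indicator_const (hA'meas k), one_mul]
            _ ≤ ENNReal.ofReal C := hkey (-(1+y))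
        have h6 : (∑' j, μ (P j \ Q j)).toReal = ∑' j, (μ (P j \ Q j)).toReal :=
          ENNReal.tsum_toReal_eq (fun j => measure_ne_top μ _)
        rw [← h6]
        exact ENNReal.toReal_le_of_le_ofReal hC.le hENN
      · have h1 : Rminus X μ (1+y) = 0 := tsum_eq_zero_of_not_summable hsum
        have h2 : 0 ≤ Rminus X μ y := tsum_nonneg (fun j => ENNReal.toReal_nonneg)
        rw [h1]
        linarith
    · -- case y < -1 : both renewal functions vanish
      have h1 : Rminus X μ (1+y) = 0 := by
        unfold Rminus
        have he : ∀ j : ℕ, {ω : Ω | -(1+y) ≤ Hdesc X j ω} = (∅ : Set Ω) := by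
          intro j; ext ω
          simp only [mem_setOf_eq, mem_empty_iff_false, iff_false, not_le]
          exact lt_of_le_of_lt (Hdesc_nonpos X ω j) (by linarith)
        simp only [he, measure_empty, ENNReal.toReal_zero, tsum_zero]
      have h2 : Rminus X μ y = 0 := by
        unfold Rminus
        have he : ∀ j : ℕ, {ω : Ω | -y ≤ Hdesc X j ω} = (∅ : Set Ω) := by
          intro j; ext ω
          simp only [mem_setOf_eq, mem_empty_iff_false, iff_false, not_le]
          exact lt_of_le_of_lt (Hdesc_nonpos X ω j) (by linarith)
        simp only [he, measure_empty, ENNReal.toReal_zero, tsum_zero]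
      rw [h1, h2]
      linarith
  · -- the uniform bound over intervals
    intro x a
    have hset : ∀ k : ℕ, {ω : Ω | (∀ j, j < k → Srw X k ω < Srw X j ω) ∧
        Srw X k ω + a ∈ Set.Ico (-x - 1) (-x)}
        = {ω : Ω | (∀ j, j < k → Srw X k ω < Srw X j ω) ∧
          Srw X k ω ∈ Set.Ico (-x-1-a) (-x-1-a+1)} := by
      intro k; ext ω
      simp only [mem_setOf_eq, Set.mem_Ico]
      constructor
      · rintro ⟨h1, h2, h3⟩
        exact ⟨h1, by linarith, by linarith⟩
      · rintro ⟨h1, h2, h3⟩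
        exact ⟨h1, by linarith, by linarith⟩
    rw [tsum_congr (fun k => by rw [hset k])]
    exact hkey (-x-1-a)
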